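/- Let delta_1,...,delta_K in [0,1) with C_S = (sum_{s in S} 1/(1-delta_s))^{-1}. If not all delta_k are equal and M > M_1 >= 0, then min{ C_K + M_1/D + ((M - M_1)/D) * K*C_K/((K-1)*C_{{2,...,K}}), C_1 + M_1/D } < C_K + M/D, where C_K := C_{{1,...,K}} and C_1 = 1 - delta_1, provided K >= 2 and delta_1 >= delta_2 >= ... >= delta_K. -/

import Mathlib

open Finset

/-- The symmetric capacity `C_S = (∑_{s∈S} 1/(1-δ_s))⁻¹` of an erasure BC. -/
noncomputable def erasureCap {K : ℕ} (δ : Fin K → ℝ) (S : Finset (Fin K)) : ℝ :=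
  (∑ s ∈ S, 1 / (1 - δ s))⁻¹

/-- On an erasure BC whose erasure probabilities are not all equal, if `M > M₁ ≥ 0` then the
upper bound of Proposition 7 is strictly below the perfect-global-gain line `C_K + M/D`:
`min{ C_K + M₁/D + ((M-M₁)/D)·K·C_K/((K-1)·C_{{2,…,K}}), C₁ + M₁/D } < C_K + M/D`. -/
theorem uniform_assignment_suboptimal {K D : ℕ} (hK : 2 ≤ K) (hD : 1 ≤ D)
    (δ : Fin K → ℝ) (hδ0 : ∀ k, 0 ≤ δ k) (hδ1 : δ ⟨0, by omega⟩ < 1)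
    (hmono : ∀ i j : Fin K, i ≤ j → δ j ≤ δ i)
    (hne : ∃ k l : Fin K, δ k ≠ δ l)
    (M M₁ : ℝ) (hM₁ : 0 ≤ M₁) (hM : M₁ < M) :
    min
      (erasureCap δ univ + M₁ / D +
        ((M - M₁) / D) * ((K : ℝ) * erasureCap δ univ /
          (((K : ℝ) - 1) * erasureCap δ (univ.erase ⟨0, by omega⟩))))
      ((1 - δ ⟨0, by omega⟩) + M₁ / D) <
      erasureCap δ univ + M / D := by
  set z : Fin K := ⟨0, by omega⟩ with hz
  set w : Fin K := ⟨K - 1, by omega⟩ with hw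
  have hle : ∀ k : Fin K, δ k ≤ δ z := fun k => hmono z k (by simp [hz, Fin.le_def])
  have hge : ∀ k : Fin K, δ w ≤ δ k := fun k =>
    hmono k w (by have := k.isLt; simp only [hw, Fin.le_def]; omega)
  have hwz : δ w < δ z := by
    rcases (hge z).lt_or_eq with h | h
    · exact h
    · exfalso
      rcases hne with ⟨k, l, hkl⟩
      have hall : ∀ m : Fin K, δ m = δ z := fun m => le_antisymm (hle m) (h ▸ hge m)
      exact hkl ((hall k).trans (hall l).symm)
  have hδlt : ∀ k, δ k < 1 := fun k => lt_of_le_of_lt (hle k) hδ1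
  have hpos : ∀ k, (0:ℝ) < 1 - δ k := fun k => by linarith [hδlt k]
  have hwne : w ≠ z := by
    simp only [hw, hz, ne_eq, Fin.mk.injEq]
    omega
  have hwmem : w ∈ univ.erase z := mem_erase.mpr ⟨hwne, mem_univ w⟩
  set S' : ℝ := ∑ s ∈ univ.erase z, 1 / (1 - δ s) with hS'
  set S : ℝ := ∑ s ∈ (univ : Finset (Fin K)), 1 / (1 - δ s) with hS
  have hS'pos : 0 < S' :=
    Finset.sum_pos (fun i _ => one_div_pos.mpr (hpos i)) ⟨w, hwmem⟩
  have hsplit : S = 1 / (1 - δ z) + S' :=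
    (Finset.add_sum_erase _ _ (mem_univ z)).symm
  have hSpos : 0 < S := by
    have : 0 < 1 / (1 - δ z) := one_div_pos.mpr (hpos z)
    linarith [hsplit]
  have hcard : (univ.erase z).card = K - 1 := by
    rw [card_erase_of_mem (mem_univ z), card_univ, Fintype.card_fin]
  have hS'lt : S' < ((K : ℝ) - 1) * (1 / (1 - δ z)) := by
    have h1 : S' < ∑ _s ∈ univ.erase z, 1 / (1 - δ z) := by
      refine Finset.sum_lt_sum (fun i _ => ?_) ⟨w, hwmem, ?_⟩
      · exact one_div_le_one_div_of_le (hpos z) (by linarith [hle i])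
      · exact one_div_lt_one_div_of_lt (hpos z) (by linarith)
    have h2 : ∑ _s ∈ univ.erase z, 1 / (1 - δ z) = ((K : ℝ) - 1) * (1 / (1 - δ z)) := by
      rw [Finset.sum_const, hcard, nsmul_eq_mul]
      congr 1
      push_cast [Nat.cast_sub (by omega : 1 ≤ K)]
      ring
    linarith [h1, h2.symm ▸ h1]
  have hKS' : (K : ℝ) * S' < ((K : ℝ) - 1) * S := by
    have hK1 : (1:ℝ) ≤ (K : ℝ) - 1 := by
      have : (2:ℝ) ≤ (K : ℝ) := by exact_mod_cast hK
      linarith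
    nlinarith [hS'lt, hsplit]
  have hr : (K : ℝ) * S⁻¹ / (((K : ℝ) - 1) * S'⁻¹) < 1 := by
    have hd : 0 < ((K : ℝ) - 1) * S'⁻¹ := by
      have : (2:ℝ) ≤ (K : ℝ) := by exact_mod_cast hK
      exact mul_pos (by linarith) (inv_pos.mpr hS'pos)
    rw [div_lt_one hd, ← div_eq_mul_inv, ← div_eq_mul_inv,
      div_lt_div_iff₀ hSpos hS'pos]
    exact hKS'
  have hDpos : (0:ℝ) < (D : ℝ) := by exact_mod_cast hD
  have hMM : 0 < (M - M₁) / (D : ℝ) := div_pos (by linarith) hDpos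
  have hmul : ((M - M₁) / (D : ℝ)) * ((K : ℝ) * S⁻¹ / (((K : ℝ) - 1) * S'⁻¹)) <
      ((M - M₁) / (D : ℝ)) * 1 := mul_lt_mul_of_pos_left hr hMM
  have hdivsum : M₁ / (D : ℝ) + (M - M₁) / (D : ℝ) = M / (D : ℝ) := by
    field_simp
    ring
  refine lt_of_le_of_lt (min_le_left _ _) ?_
  simp only [erasureCap, ← hS, ← hS']
  linarith [hmul, hdivsum]
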